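/- The only solutions in positive integers m and a of the equation F_{m+4} - F_m = 2^a are given by m = 1, a = 2. -/

import Mathlib

lemma fib4_eq (m : ℕ) : Nat.fib (m + 4) = 2 * Nat.fib m + 3 * Nat.fib (m + 1) := by
  have h2 : Nat.fib (m + 2) = Nat.fib m + Nat.fib (m + 1) := Nat.fib_add_two
  have h3 : Nat.fib (m + 3) = Nat.fib (m + 1) + Nat.fib (m + 2) := Nat.fib_add_two
  have h4 : Nat.fib (m + 4) = Nat.fib (m + 2) + Nat.fib (m + 3) := Nat.fib_add_two
  omega

lemma fib_mod8 (m : ℕ) : Nat.fib (m + 12) % 8 = Nat.fib m % 8 := by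
  have h := Nat.fib_add m 11
  norm_num at h
  have : Nat.fib (m + 12) = Nat.fib m + 8 * (11 * Nat.fib m + 18 * Nat.fib (m + 1)) := by
    rw [show m + 12 = m + 11 + 1 from rfl, h]; ring
  omega

lemma noz : ∀ m, (3 * Nat.fib (m + 1) + Nat.fib m) % 8 ≠ 0 := by
  intro m
  induction m using Nat.strong_induction_on with
  | _ m ih =>
    by_cases h : m < 12
    · interval_cases m <;> decide
    · obtain ⟨k, rfl⟩ : ∃ k, m = k + 12 := ⟨m - 12, by omega⟩
      have h1 := fib_mod8 k
      have h2 := fib_mod8 (k + 1)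
      have h3 := ih k (by omega)
      rw [show k + 12 + 1 = k + 1 + 12 from rfl]
      omega

theorem fib_add_four_sub_fib_eq_pow_two (m a : ℕ) (hm : 0 < m) (ha : 0 < a) :
    Nat.fib (m + 4) - Nat.fib m = 2 ^ a ↔ m = 1 ∧ a = 2 := by
  constructor
  · intro h
    have key : 3 * Nat.fib (m + 1) + Nat.fib m = 2 ^ a := by
      have := fib4_eq m; omega
    -- a ≤ 2, since 2^a % 8 ≠ 0
    have ha2 : a ≤ 2 := by
      by_contra hc
      have : 2 ^ a % 8 = 0 := by
        obtain ⟨b, rfl⟩ : ∃ b, a = b + 3 := ⟨a - 3, by omega⟩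
        have : 2 ^ (b + 3) = 8 * 2 ^ b := by ring
        omega
      exact noz m (by omega)
    have hf1 : 1 ≤ Nat.fib (m + 1) := Nat.fib_pos.mpr (by omega)
    have hfm : 1 ≤ Nat.fib m := Nat.fib_pos.mpr hm
    interval_cases a
    · omega
    · -- 3*fib(m+1)+fib m = 4 forces m = 1
      norm_num at key
      have hm1 : m = 1 := by
        by_contra hne
        have : 2 ≤ Nat.fib (m + 1) := by
          have : Nat.fib 3 ≤ Nat.fib (m + 1) := Nat.fib_mono (by omega)
          simpa [show Nat.fib 3 = 2 from rfl] using this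
        omega
      exact ⟨hm1, rfl⟩
  · rintro ⟨rfl, rfl⟩
    decide
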